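/- (Proposition 4.2) Let N ≥ 2 and let q ∈ ℂ^N have pairwise distinct entries. (i) For fixed z_1, z_2 with z_1, z_2, z_1−z_2 nonzero, the matrix-valued function ℏ ↦ ℏ·E(ℏ, z_1, z_2; q) tends to 1_N ⊗ 1_N as ℏ → 0 (through admissible values). (ii) For fixed ℏ, z_2 with ℏ, z_2, z_2+ℏ nonzero, the matrix-valued function z_1 ↦ (z_1−z_2)·E(ℏ, z_1, z_2; q) tends to the permutation operator P_{12} as z_1 → z_2 (through admissible values). -/

import Mathlib

open Matrix Finset Polynomial Filter
open scoped Kronecker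

noncomputable section

/-- `ρ(i)`: in 1-based terms ρ(i) = i−1 for 1 ≤ i ≤ N−1 and ρ(N) = N. -/
def rho (N : ℕ) (i : Fin N) : ℕ := if (i : ℕ) = N - 1 then N else (i : ℕ)

/-- `q̄_j = q_j − (1/N)·Σ_k q_k`. -/
def qbar (N : ℕ) (q : Fin N → ℂ) (j : Fin N) : ℂ := q j - (∑ k, q k) / N

/-- The generalized Vandermonde matrix `Ξ(z,q)` with entries `(z + q̄_j)^{ρ(i)}`. -/
def Xi (N : ℕ) (z : ℂ) (q : Fin N → ℂ) : Matrix (Fin N) (Fin N) ℂ :=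
  Matrix.of fun i j => (z + qbar N q j) ^ rho N i

/-- The diagonal matrix `D(q)` with `D_{ii}(q) = ∏_{k≠i}(q_i − q_k)`. -/
def Dmat (N : ℕ) (q : Fin N → ℂ) : Matrix (Fin N) (Fin N) ℂ :=
  Matrix.diagonal fun i => ∏ k ∈ Finset.univ.erase i, (q i - q k)

/-- The IRF-Vertex transformation matrix `g(z,q) = Ξ(z,q)·D(q)⁻¹`. -/
def gmat (N : ℕ) (z : ℂ) (q : Fin N → ℂ) : Matrix (Fin N) (Fin N) ℂ :=
  Xi N z q * (Dmat N q)⁻¹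

/-- The matrix unit `E_{ij}`. -/
def Eu (N : ℕ) (i j : Fin N) : Matrix (Fin N) (Fin N) ℂ := Matrix.single i j 1

/-- The permutation operator `P_{12} = Σ_{i,j} E_{ij} ⊗ E_{ji}`. -/
def Pmat (N : ℕ) : Matrix (Fin N × Fin N) (Fin N × Fin N) ℂ :=
  ∑ i, ∑ j, Eu N i j ⊗ₖ Eu N j i

/-- The semi-dynamical rational GL_N R-matrix `R^{sd}(ℏ,z_1,z_2|q)`. -/
def Rsd (N : ℕ) (hb z1 z2 : ℂ) (q : Fin N → ℂ) : Matrix (Fin N × Fin N) (Fin N × Fin N) ℂ :=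
  (∑ i, ∑ j ∈ Finset.univ.erase i, (1/(z1 - z2) + (N : ℂ)/(q j - q i)) • (Eu N i j ⊗ₖ Eu N j i))
  + (∑ i, ∑ j ∈ Finset.univ.erase i, (1/hb + (N : ℂ)/(q j - q i)) • (Eu N i i ⊗ₖ Eu N j j))
  - (∑ i, ∑ j ∈ Finset.univ.erase i, (1/(z1 + hb) + (N : ℂ)/(q j - q i)) • (Eu N i j ⊗ₖ Eu N j j))
  + (∑ i, ∑ j ∈ Finset.univ.erase i, (1/z2 + (N : ℂ)/(q j - q i)) • (Eu N j j ⊗ₖ Eu N i j))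
  + (1/(z1 - z2) + 1/z2 + 1/hb - 1/(z1 + hb)) • ∑ i, Eu N i i ⊗ₖ Eu N i i

/-- Admissibility of the data `(ℏ, z_1, z_2, q)`: the entries of `q` are pairwise distinct and
`ℏ, z_1, z_2, z_1−z_2, z_1+ℏ, z_2+ℏ` are all nonzero. -/
def Admissible (N : ℕ) (hb z1 z2 : ℂ) (q : Fin N → ℂ) : Prop :=
  Function.Injective q ∧ hb ≠ 0 ∧ z1 ≠ 0 ∧ z2 ≠ 0 ∧ z1 - z2 ≠ 0 ∧ z1 + hb ≠ 0 ∧ z2 + hb ≠ 0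

/-- The gauge-transformed (vertex-type) R-matrix
`E(ℏ,z_1,z_2;q) = (1⊗g(z_2,q))·(g(z_1+ℏ,q)⊗1)·R^{sd}(ℏ,z_1,z_2|q)·(1⊗g(z_2+ℏ,q)⁻¹)·(g(z_1,q)⁻¹⊗1)`. -/
def Evtx (N : ℕ) (hb z1 z2 : ℂ) (q : Fin N → ℂ) : Matrix (Fin N × Fin N) (Fin N × Fin N) ℂ :=
  ((1 : Matrix (Fin N) (Fin N) ℂ) ⊗ₖ gmat N z2 q)
  * (gmat N (z1 + hb) q ⊗ₖ (1 : Matrix (Fin N) (Fin N) ℂ))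
  * Rsd N hb z1 z2 q
  * ((1 : Matrix (Fin N) (Fin N) ℂ) ⊗ₖ (gmat N (z2 + hb) q)⁻¹)
  * ((gmat N z1 q)⁻¹ ⊗ₖ (1 : Matrix (Fin N) (Fin N) ℂ))

lemma rho_le {N : ℕ} (i : Fin N) : rho N i ≤ N := by
  unfold rho; split <;> omega

lemma rho_ne_pred {N : ℕ} (hN : 1 ≤ N) (i : Fin N) : rho N i ≠ N - 1 := by
  unfold rho; split <;> omega

lemma rho_injective {N : ℕ} : Function.Injective (rho N) := by
  intro a b hab
  have ha := a.isLt; have hb := b.isLt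
  unfold rho at hab
  apply Fin.ext
  split at hab <;> split at hab <;> omega

lemma qbar_injective {N : ℕ} {q : Fin N → ℂ} (hq : Function.Injective q) :
    Function.Injective (qbar N q) := by
  intro a b hab
  apply hq
  have : q a - (∑ k, q k) / N = q b - (∑ k, q k) / N := hab
  linear_combination this

lemma sum_qbar {N : ℕ} (hN : N ≠ 0) (q : Fin N → ℂ) (z : ℂ) :
    ∑ j, (z + qbar N q j) = N * z := by
  have hN' : (N : ℂ) ≠ 0 := Nat.cast_ne_zero.mpr hN
  simp only [qbar, Finset.sum_add_distrib, Finset.sum_sub_distrib, Finset.sum_const,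
    Finset.card_univ, Fintype.card_fin, nsmul_eq_mul]
  field_simp
  ring

lemma det_Xi_ne_zero {N : ℕ} (hN : 1 ≤ N) {z : ℂ} (hz : z ≠ 0) {q : Fin N → ℂ}
    (hq : Function.Injective q) : (Xi N z q).det ≠ 0 := by
  intro hdet
  obtain ⟨v, hv, hvM⟩ := Matrix.exists_vecMul_eq_zero_iff.mpr hdet
  set x : Fin N → ℂ := fun j => z + qbar N q j with hx
  have hxinj : Function.Injective x := fun a b hab => qbar_injective hq (by
    simpa [hx] using hab)
  set p : ℂ[X] := ∑ i, Polynomial.C (v i) * Polynomial.X ^ rho N i with hp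
  have heval : ∀ j, p.eval (x j) = 0 := by
    intro j
    have := congrFun hvM j
    simpa [hp, Matrix.vecMul, dotProduct, Xi, eval_finset_sum] using this
  have hcoeff : ∀ n, p.coeff n = ∑ i, if rho N i = n then v i else 0 := by
    intro n
    simp [hp, Polynomial.finset_sum_coeff, Polynomial.coeff_C_mul, Polynomial.coeff_X_pow,
      mul_ite, mul_one, mul_zero, eq_comm]
  have hpz : p = 0 := by
    by_contra hpne
    -- the product of (X - x j) divides p
    have hdvd : (∏ j, (Polynomial.X - Polynomial.C (x j))) ∣ p := by
      have hle : (Finset.univ.val.map x) ≤ p.roots := by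
        rw [Multiset.le_iff_subset (Multiset.Nodup.map hxinj Finset.univ.nodup)]
        intro a ha
        obtain ⟨j, _, rfl⟩ := Multiset.mem_map.mp ha
        exact (Polynomial.mem_roots hpne).mpr (heval j)
      have := (Multiset.prod_X_sub_C_dvd_iff_le_roots hpne (Finset.univ.val.map x)).mpr hle
      simpa [Finset.prod, Multiset.map_map, Function.comp_def] using this
    set W : ℂ[X] := ∏ j, (Polynomial.X - Polynomial.C (x j)) with hW
    have hWmonic : W.Monic := monic_prod_of_monic _ _ (fun j _ => monic_X_sub_C _)
    have hWdeg : W.natDegree = N := by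
      rw [hW, Polynomial.natDegree_prod _ _ (fun j _ => X_sub_C_ne_zero (x j))]
      simp [Polynomial.natDegree_X_sub_C]
    have hdegle : p.natDegree ≤ N :=
      Polynomial.natDegree_sum_le_of_forall_le _ _ (fun i _ =>
        (Polynomial.natDegree_C_mul_le _ _).trans
          ((Polynomial.natDegree_X_pow _).le.trans (rho_le i)))
    have hdegeq : p.natDegree = N :=
      le_antisymm hdegle (hWdeg ▸ Polynomial.natDegree_le_of_dvd hdvd hpne)
    obtain ⟨u, hu⟩ := hdvd
    have hune : u ≠ 0 := fun h => hpne (by simp [hu, h])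
    have hudeg : u.natDegree = 0 := by
      have := Polynomial.natDegree_mul hWmonic.ne_zero hune
      rw [← hu, hdegeq, hWdeg] at this
      omega
    have huC : u = Polynomial.C (u.coeff 0) := Polynomial.eq_C_of_natDegree_eq_zero hudeg
    have hc : u.coeff 0 ≠ 0 := fun h => hune (by rw [huC, h, map_zero])
    have hWnext : W.coeff (N - 1) = -(N * z) := by
      have h1 : W.nextCoeff = ∑ j, Polynomial.nextCoeff (Polynomial.X - Polynomial.C (x j)) :=
        Polynomial.Monic.nextCoeff_prod _ _ (fun j _ => monic_X_sub_C _)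
      have h2 : W.nextCoeff = W.coeff (W.natDegree - 1) :=
        Polynomial.nextCoeff_of_natDegree_pos (by omega)
      rw [hWdeg] at h2
      have hsum : ∑ j, x j = N * z := by rw [hx]; exact sum_qbar (by omega) q z
      rw [← h2, h1]
      simp only [Polynomial.nextCoeff_X_sub_C]
      rw [Finset.sum_neg_distrib, hsum]
    have hpcoeff0 : p.coeff (N - 1) = 0 := by
      rw [hcoeff]
      exact Finset.sum_eq_zero (fun i _ => if_neg (rho_ne_pred hN i))
    have : p.coeff (N - 1) = W.coeff (N - 1) * u.coeff 0 := by
      rw [hu, huC, Polynomial.coeff_mul_C, Polynomial.coeff_C_zero]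
    rw [hpcoeff0, hWnext] at this
    have hNz : (N : ℂ) * z ≠ 0 := mul_ne_zero (Nat.cast_ne_zero.mpr (by omega)) hz
    rcases mul_eq_zero.mp this.symm with h | h
    · exact hNz (neg_eq_zero.mp h)
    · exact hc h
  -- conclude v = 0
  apply hv
  funext k
  have := hcoeff (rho N k)
  rw [hpz] at this
  simp only [Polynomial.coeff_zero] at this
  have : (0:ℂ) = ∑ i, if rho N i = rho N k then v i else 0 := this
  rw [Finset.sum_eq_single k (fun i _ hik => if_neg (fun h => hik (rho_injective h)))
    (by simp)] at this
  simpa using this.symm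

lemma det_Dmat_ne_zero {N : ℕ} {q : Fin N → ℂ} (hq : Function.Injective q) :
    (Dmat N q).det ≠ 0 := by
  rw [Dmat, Matrix.det_diagonal]
  exact Finset.prod_ne_zero_iff.mpr fun i _ =>
    Finset.prod_ne_zero_iff.mpr fun k hk =>
      sub_ne_zero_of_ne (fun h => (Finset.mem_erase.mp hk).1 (hq h.symm))

lemma det_gmat_ne_zero {N : ℕ} (hN : 1 ≤ N) {z : ℂ} (hz : z ≠ 0) {q : Fin N → ℂ}
    (hq : Function.Injective q) : (gmat N z q).det ≠ 0 := by
  rw [gmat, Matrix.det_mul, Matrix.det_nonsing_inv]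
  apply mul_ne_zero (det_Xi_ne_zero hN hz hq)
  rw [Ring.inverse_eq_inv']
  exact inv_ne_zero (det_Dmat_ne_zero hq)

lemma gmat_mul_inv {N : ℕ} (hN : 1 ≤ N) {z : ℂ} (hz : z ≠ 0) {q : Fin N → ℂ}
    (hq : Function.Injective q) : gmat N z q * (gmat N z q)⁻¹ = 1 :=
  Matrix.mul_nonsing_inv _ (isUnit_iff_ne_zero.mpr (det_gmat_ne_zero hN hz hq))

lemma continuous_gmat {N : ℕ} (q : Fin N → ℂ) : Continuous fun z => gmat N z q := by
  apply continuous_matrix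
  intro i j
  simp only [gmat, Matrix.mul_apply]
  refine continuous_finset_sum _ fun k _ => Continuous.mul ?_ continuous_const
  simp only [Xi, Matrix.of_apply]
  exact (continuous_id.add continuous_const).pow _

lemma tendsto_gmat_inv {N : ℕ} (hN : 1 ≤ N) {z0 : ℂ} (hz0 : z0 ≠ 0) {q : Fin N → ℂ}
    (hq : Function.Injective q) :
    Filter.Tendsto (fun z => (gmat N z q)⁻¹) (nhds z0) (nhds (gmat N z0 q)⁻¹) := by
  have hdet : ContinuousAt Ring.inverse (gmat N z0 q).det := by
    rw [Ring.inverse_eq_inv']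
    exact continuousAt_inv₀ (det_gmat_ne_zero hN hz0 hq)
  exact Filter.Tendsto.comp (continuousAt_matrix_inv _ hdet) (continuous_gmat q).continuousAt

lemma continuous_kron_left {N : ℕ} (C : Matrix (Fin N) (Fin N) ℂ) :
    Continuous fun A : Matrix (Fin N) (Fin N) ℂ => A ⊗ₖ C := by
  apply continuous_matrix
  intro i j
  have h1 : Continuous fun A : Matrix (Fin N) (Fin N) ℂ => A i.1 j.1 :=
    (continuous_apply j.1).comp (continuous_apply i.1)
  exact h1.mul continuous_const

lemma continuous_kron_right {N : ℕ} (C : Matrix (Fin N) (Fin N) ℂ) :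
    Continuous fun A : Matrix (Fin N) (Fin N) ℂ => C ⊗ₖ A := by
  apply continuous_matrix
  intro i j
  have h1 : Continuous fun A : Matrix (Fin N) (Fin N) ℂ => A i.2 j.2 :=
    (continuous_apply j.2).comp (continuous_apply i.2)
  exact continuous_const.mul h1

lemma sum_ite_diag {N : ℕ} (a b : Fin N) :
    (∑ i, if i = a ∧ i = b then (1:ℂ) else 0) = (1 : Matrix (Fin N) (Fin N) ℂ) a b := by
  by_cases h : a = b
  · subst h
    rw [Matrix.one_apply_eq, Finset.sum_eq_single a (fun i _ hi => if_neg (fun hc => hi hc.1))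
      (by simp), if_pos ⟨rfl, rfl⟩]
  · rw [Matrix.one_apply_ne h, Finset.sum_eq_zero]
    intro i _
    exact if_neg (fun hc => h (hc.1.symm.trans hc.2))

lemma sum_Eu_diag (N : ℕ) : ∑ i, Eu N i i = 1 := by
  ext a b
  rw [Matrix.sum_apply]
  simp only [Eu, Matrix.single, Matrix.of_apply]
  exact sum_ite_diag a b

lemma sum_sum_Eu_kron (N : ℕ) :
    ∑ i, ∑ j, Eu N i i ⊗ₖ Eu N j j
      = ((1 : Matrix (Fin N) (Fin N) ℂ) ⊗ₖ (1 : Matrix (Fin N) (Fin N) ℂ)) := by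
  ext x y
  rw [Matrix.sum_apply]
  simp only [Matrix.sum_apply, Matrix.kroneckerMap_apply, Eu, Matrix.single,
    Matrix.of_apply]
  rw [← Finset.sum_mul_sum]
  rw [sum_ite_diag, sum_ite_diag]

lemma Pmat_apply {N : ℕ} (x y : Fin N × Fin N) :
    Pmat N x y = if x.1 = y.2 ∧ x.2 = y.1 then 1 else 0 := by
  obtain ⟨a, b⟩ := x; obtain ⟨c, d⟩ := y
  simp only [Pmat, Matrix.sum_apply, Matrix.kroneckerMap_apply, Eu, Matrix.single,
    Matrix.of_apply]
  rw [Finset.sum_eq_single d (fun i _ hi => Finset.sum_eq_zero fun j _ => by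
    rw [show (if j = b ∧ i = d then (1:ℂ) else 0) = 0 from if_neg (fun hc => hi hc.2), mul_zero])
    (by simp)]
  rw [Finset.sum_eq_single b (fun j _ hj => by
    rw [show (if j = b ∧ d = d then (1:ℂ) else 0) = 0 from if_neg (fun hc => hj hc.1), mul_zero])
    (by simp)]
  by_cases h1 : a = d <;> by_cases h2 : b = c <;>
    simp [h1, h2, eq_comm]

lemma Pmat_mul_kron {N : ℕ} (A B : Matrix (Fin N) (Fin N) ℂ) :
    Pmat N * (A ⊗ₖ B) = (B ⊗ₖ A) * Pmat N := by
  ext x y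
  obtain ⟨a, b⟩ := x; obtain ⟨c, d⟩ := y
  simp only [Matrix.mul_apply, Pmat_apply, Matrix.kroneckerMap_apply, Fintype.sum_prod_type,
    ite_mul, mul_ite, one_mul, zero_mul, mul_one, mul_zero, ite_and]
  simp [Finset.sum_ite_eq, Finset.sum_ite_eq', mul_comm]

lemma scalar_key {l : Filter ℂ} {f v : ℂ → ℂ} {d : ℂ} (hf0 : Filter.Tendsto f l (nhds 0))
    (hfne : ∀ᶠ x in l, f x ≠ 0) (hv : Filter.Tendsto v l (nhds d)) :
    Filter.Tendsto (fun x => f x * (1/(f x) + v x)) l (nhds 1) := by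
  have hev : (fun x => 1 + f x * v x) =ᶠ[l] fun x => f x * (1/(f x) + v x) := by
    filter_upwards [hfne] with x hx
    field_simp
  refine Filter.Tendsto.congr' hev ?_
  simpa using tendsto_const_nhds.add (hf0.mul hv)

lemma part1_Rsd {N : ℕ} (z1 z2 : ℂ) (q : Fin N → ℂ) (hz1 : z1 ≠ 0) :
    Filter.Tendsto (fun h : ℂ => h • Rsd N h z1 z2 q) (nhdsWithin 0 {h : ℂ | h ≠ 0})
      (nhds ((1 : Matrix (Fin N) (Fin N) ℂ) ⊗ₖ (1 : Matrix (Fin N) (Fin N) ℂ))) := by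
  set l := nhdsWithin (0:ℂ) {h : ℂ | h ≠ 0} with hl
  have hfne : ∀ᶠ h in l, h ≠ 0 := self_mem_nhdsWithin
  have hf0 : Filter.Tendsto (fun h : ℂ => h) l (nhds 0) :=
    Filter.tendsto_id.mono_left nhdsWithin_le_nhds
  have key : ∀ h : ℂ, h • Rsd N h z1 z2 q =
      (∑ i, ∑ j ∈ Finset.univ.erase i,
        (h * (1/(z1 - z2) + (N : ℂ)/(q j - q i))) • (Eu N i j ⊗ₖ Eu N j i))
      + (∑ i, ∑ j ∈ Finset.univ.erase i,
        (h * (1/h + (N : ℂ)/(q j - q i))) • (Eu N i i ⊗ₖ Eu N j j))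
      - (∑ i, ∑ j ∈ Finset.univ.erase i,
        (h * (1/(z1 + h) + (N : ℂ)/(q j - q i))) • (Eu N i j ⊗ₖ Eu N j j))
      + (∑ i, ∑ j ∈ Finset.univ.erase i,
        (h * (1/z2 + (N : ℂ)/(q j - q i))) • (Eu N j j ⊗ₖ Eu N i j))
      + (h * (1/(z1 - z2) + 1/z2 + 1/h - 1/(z1 + h))) • ∑ i, Eu N i i ⊗ₖ Eu N i i := by
    intro h
    simp only [Rsd, smul_add, smul_sub, Finset.smul_sum, smul_smul]
  have B1 : Filter.Tendsto (fun h : ℂ => ∑ i, ∑ j ∈ Finset.univ.erase i,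
      (h * (1/(z1 - z2) + (N : ℂ)/(q j - q i))) • (Eu N i j ⊗ₖ Eu N j i)) l (nhds 0) := by
    have := tendsto_finset_sum (Finset.univ : Finset (Fin N)) fun i _ =>
      tendsto_finset_sum (Finset.univ.erase i) fun j _ =>
        ((hf0.mul_const (1/(z1 - z2) + (N : ℂ)/(q j - q i))).smul_const (Eu N i j ⊗ₖ Eu N j i))
    simpa using this
  have B2 : Filter.Tendsto (fun h : ℂ => ∑ i, ∑ j ∈ Finset.univ.erase i,
      (h * (1/h + (N : ℂ)/(q j - q i))) • (Eu N i i ⊗ₖ Eu N j j)) l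
      (nhds (∑ i, ∑ j ∈ Finset.univ.erase i, Eu N i i ⊗ₖ Eu N j j)) := by
    have := tendsto_finset_sum (Finset.univ : Finset (Fin N)) fun i _ =>
      tendsto_finset_sum (Finset.univ.erase i) fun j _ =>
        ((scalar_key (v := fun _ : ℂ => (N : ℂ)/(q j - q i)) hf0 hfne tendsto_const_nhds).smul_const (Eu N i i ⊗ₖ Eu N j j))
    simpa using this
  have hw : Filter.Tendsto (fun h : ℂ => 1/(z1 + h)) l (nhds (1/z1)) := by
    have : ContinuousAt (fun h : ℂ => 1/(z1 + h)) 0 :=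
      ContinuousAt.div continuousAt_const (continuousAt_const.add continuousAt_id)
        (by simpa using hz1)
    simpa using this.mono_left nhdsWithin_le_nhds
  have B3 : Filter.Tendsto (fun h : ℂ => ∑ i, ∑ j ∈ Finset.univ.erase i,
      (h * (1/(z1 + h) + (N : ℂ)/(q j - q i))) • (Eu N i j ⊗ₖ Eu N j j)) l (nhds 0) := by
    have := tendsto_finset_sum (Finset.univ : Finset (Fin N)) fun i _ =>
      tendsto_finset_sum (Finset.univ.erase i) fun j _ =>
        ((hf0.mul (hw.add (tendsto_const_nhds (x := (N : ℂ)/(q j - q i))))).smul_const (Eu N i j ⊗ₖ Eu N j j))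
    simpa using this
  have B4 : Filter.Tendsto (fun h : ℂ => ∑ i, ∑ j ∈ Finset.univ.erase i,
      (h * (1/z2 + (N : ℂ)/(q j - q i))) • (Eu N j j ⊗ₖ Eu N i j)) l (nhds 0) := by
    have := tendsto_finset_sum (Finset.univ : Finset (Fin N)) fun i _ =>
      tendsto_finset_sum (Finset.univ.erase i) fun j _ =>
        ((hf0.mul_const (1/z2 + (N : ℂ)/(q j - q i))).smul_const (Eu N j j ⊗ₖ Eu N i j))
    simpa using this
  have B5 : Filter.Tendsto (fun h : ℂ =>
      (h * (1/(z1 - z2) + 1/z2 + 1/h - 1/(z1 + h))) • ∑ i, Eu N i i ⊗ₖ Eu N i i) l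
      (nhds (∑ i, Eu N i i ⊗ₖ Eu N i i)) := by
    have hs : Filter.Tendsto (fun h : ℂ => h * (1/(z1 - z2) + 1/z2 + 1/h - 1/(z1 + h))) l
        (nhds 1) := by
      have := scalar_key (v := fun h : ℂ => 1/(z1 - z2) + 1/z2 - 1/(z1 + h)) hf0 hfne
        ((tendsto_const_nhds.sub hw))
      exact this.congr (fun x => by ring)
    simpa using hs.smul_const (∑ i, Eu N i i ⊗ₖ Eu N i i)
  have total := ((((B1.add B2).sub B3).add B4).add B5)
  rw [show ((0 : Matrix (Fin N × Fin N) (Fin N × Fin N) ℂ)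
      + (∑ i, ∑ j ∈ Finset.univ.erase i, Eu N i i ⊗ₖ Eu N j j) - 0 + 0
      + ∑ i, Eu N i i ⊗ₖ Eu N i i)
      = ((1 : Matrix (Fin N) (Fin N) ℂ) ⊗ₖ (1 : Matrix (Fin N) (Fin N) ℂ)) from ?_] at total
  · exact Filter.Tendsto.congr (fun h => (key h).symm) total
  · rw [zero_add, sub_zero, add_zero, ← sum_sum_Eu_kron N, ← Finset.sum_add_distrib]
    exact Finset.sum_congr rfl fun i _ => Finset.sum_erase_add _ _ (Finset.mem_univ i)

lemma part2_Rsd {N : ℕ} (hb z2 : ℂ) (q : Fin N → ℂ) (hbne : hb ≠ 0) (hz2hb : z2 + hb ≠ 0) :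
    Filter.Tendsto (fun z1 : ℂ => (z1 - z2) • Rsd N hb z1 z2 q)
      (nhdsWithin z2 {z1 : ℂ | z1 - z2 ≠ 0}) (nhds (Pmat N)) := by
  set l := nhdsWithin z2 {z1 : ℂ | z1 - z2 ≠ 0} with hl
  have hfne : ∀ᶠ z1 in l, z1 - z2 ≠ 0 := self_mem_nhdsWithin
  have hf0 : Filter.Tendsto (fun z1 : ℂ => z1 - z2) l (nhds 0) := by
    have : ContinuousAt (fun z1 : ℂ => z1 - z2) z2 := continuousAt_id.sub continuousAt_const
    simpa using this.mono_left nhdsWithin_le_nhds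
  have key : ∀ z1 : ℂ, (z1 - z2) • Rsd N hb z1 z2 q =
      (∑ i, ∑ j ∈ Finset.univ.erase i,
        ((z1 - z2) * (1/(z1 - z2) + (N : ℂ)/(q j - q i))) • (Eu N i j ⊗ₖ Eu N j i))
      + (∑ i, ∑ j ∈ Finset.univ.erase i,
        ((z1 - z2) * (1/hb + (N : ℂ)/(q j - q i))) • (Eu N i i ⊗ₖ Eu N j j))
      - (∑ i, ∑ j ∈ Finset.univ.erase i,
        ((z1 - z2) * (1/(z1 + hb) + (N : ℂ)/(q j - q i))) • (Eu N i j ⊗ₖ Eu N j j))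
      + (∑ i, ∑ j ∈ Finset.univ.erase i,
        ((z1 - z2) * (1/z2 + (N : ℂ)/(q j - q i))) • (Eu N j j ⊗ₖ Eu N i j))
      + ((z1 - z2) * (1/(z1 - z2) + 1/z2 + 1/hb - 1/(z1 + hb))) • ∑ i, Eu N i i ⊗ₖ Eu N i i := by
    intro z1
    simp only [Rsd, smul_add, smul_sub, Finset.smul_sum, smul_smul]
  have B1 : Filter.Tendsto (fun z1 : ℂ => ∑ i, ∑ j ∈ Finset.univ.erase i,
      ((z1 - z2) * (1/(z1 - z2) + (N : ℂ)/(q j - q i))) • (Eu N i j ⊗ₖ Eu N j i)) l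
      (nhds (∑ i, ∑ j ∈ Finset.univ.erase i, Eu N i j ⊗ₖ Eu N j i)) := by
    have := tendsto_finset_sum (Finset.univ : Finset (Fin N)) fun i _ =>
      tendsto_finset_sum (Finset.univ.erase i) fun j _ =>
        ((scalar_key (f := fun z1 : ℂ => z1 - z2) (v := fun _ : ℂ => (N : ℂ)/(q j - q i))
          hf0 hfne tendsto_const_nhds).smul_const (Eu N i j ⊗ₖ Eu N j i))
    simpa using this
  have B2 : Filter.Tendsto (fun z1 : ℂ => ∑ i, ∑ j ∈ Finset.univ.erase i,
      ((z1 - z2) * (1/hb + (N : ℂ)/(q j - q i))) • (Eu N i i ⊗ₖ Eu N j j)) l (nhds 0) := by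
    have := tendsto_finset_sum (Finset.univ : Finset (Fin N)) fun i _ =>
      tendsto_finset_sum (Finset.univ.erase i) fun j _ =>
        ((hf0.mul_const (1/hb + (N : ℂ)/(q j - q i))).smul_const (Eu N i i ⊗ₖ Eu N j j))
    simpa using this
  have hw : Filter.Tendsto (fun z1 : ℂ => 1/(z1 + hb)) l (nhds (1/(z2 + hb))) := by
    have : ContinuousAt (fun z1 : ℂ => 1/(z1 + hb)) z2 :=
      ContinuousAt.div continuousAt_const (continuousAt_id.add continuousAt_const)
        (by simpa using hz2hb)
    simpa using this.mono_left nhdsWithin_le_nhds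
  have B3 : Filter.Tendsto (fun z1 : ℂ => ∑ i, ∑ j ∈ Finset.univ.erase i,
      ((z1 - z2) * (1/(z1 + hb) + (N : ℂ)/(q j - q i))) • (Eu N i j ⊗ₖ Eu N j j)) l (nhds 0) := by
    have := tendsto_finset_sum (Finset.univ : Finset (Fin N)) fun i _ =>
      tendsto_finset_sum (Finset.univ.erase i) fun j _ =>
        ((hf0.mul (hw.add (tendsto_const_nhds (x := (N : ℂ)/(q j - q i))))).smul_const
          (Eu N i j ⊗ₖ Eu N j j))
    simpa using this
  have B4 : Filter.Tendsto (fun z1 : ℂ => ∑ i, ∑ j ∈ Finset.univ.erase i,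
      ((z1 - z2) * (1/z2 + (N : ℂ)/(q j - q i))) • (Eu N j j ⊗ₖ Eu N i j)) l (nhds 0) := by
    have := tendsto_finset_sum (Finset.univ : Finset (Fin N)) fun i _ =>
      tendsto_finset_sum (Finset.univ.erase i) fun j _ =>
        ((hf0.mul_const (1/z2 + (N : ℂ)/(q j - q i))).smul_const (Eu N j j ⊗ₖ Eu N i j))
    simpa using this
  have B5 : Filter.Tendsto (fun z1 : ℂ =>
      ((z1 - z2) * (1/(z1 - z2) + 1/z2 + 1/hb - 1/(z1 + hb))) • ∑ i, Eu N i i ⊗ₖ Eu N i i) l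
      (nhds (∑ i, Eu N i i ⊗ₖ Eu N i i)) := by
    have hs : Filter.Tendsto
        (fun z1 : ℂ => (z1 - z2) * (1/(z1 - z2) + 1/z2 + 1/hb - 1/(z1 + hb))) l (nhds 1) := by
      have := scalar_key (f := fun z1 : ℂ => z1 - z2)
        (v := fun z1 : ℂ => 1/z2 + 1/hb - 1/(z1 + hb)) hf0 hfne
        ((tendsto_const_nhds.sub hw))
      exact this.congr (fun x => by ring)
    simpa using hs.smul_const (∑ i, Eu N i i ⊗ₖ Eu N i i)
  have total := ((((B1.add B2).sub B3).add B4).add B5)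
  rw [show ((∑ i, ∑ j ∈ Finset.univ.erase i, Eu N i j ⊗ₖ Eu N j i)
      + (0 : Matrix (Fin N × Fin N) (Fin N × Fin N) ℂ) - 0 + 0
      + ∑ i, Eu N i i ⊗ₖ Eu N i i) = Pmat N from ?_] at total
  · exact Filter.Tendsto.congr (fun z1 => (key z1).symm) total
  · rw [add_zero, sub_zero, add_zero, Pmat, ← Finset.sum_add_distrib]
    exact Finset.sum_congr rfl fun i _ => Finset.sum_erase_add _ _ (Finset.mem_univ i)

/-- Proposition 4.2. Local behaviour of the gauge-transformed R-matrix: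
(i) `ℏ·E(ℏ,z_1,z_2;q) → 1_N ⊗ 1_N` as `ℏ → 0` through admissible values;
(ii) `(z_1−z_2)·E(ℏ,z_1,z_2;q) → P₁₂` as `z_1 → z_2` through admissible values. -/
theorem Evtx_local_behaviour (N : ℕ) (hN : 2 ≤ N) (q : Fin N → ℂ)
    (hq : Function.Injective q) :
    (∀ z1 z2 : ℂ, z1 ≠ 0 → z2 ≠ 0 → z1 - z2 ≠ 0 →
      Filter.Tendsto (fun h : ℂ => h • Evtx N h z1 z2 q)
        (nhdsWithin 0 {h : ℂ | Admissible N h z1 z2 q})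
        (nhds ((1 : Matrix (Fin N) (Fin N) ℂ) ⊗ₖ (1 : Matrix (Fin N) (Fin N) ℂ)))) ∧
    (∀ hb z2 : ℂ, hb ≠ 0 → z2 ≠ 0 → z2 + hb ≠ 0 →
      Filter.Tendsto (fun z1 : ℂ => (z1 - z2) • Evtx N hb z1 z2 q)
        (nhdsWithin z2 {z1 : ℂ | Admissible N hb z1 z2 q})
        (nhds (Pmat N))) := by
  have hN1 : 1 ≤ N := by omega
  constructor
  · intro z1 z2 hz1 hz2 hz12
    set l := nhdsWithin (0:ℂ) {h : ℂ | Admissible N h z1 z2 q} with hl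
    have key : ∀ h : ℂ, h • Evtx N h z1 z2 q =
        (((1 : Matrix (Fin N) (Fin N) ℂ) ⊗ₖ gmat N z2 q)
          * (gmat N (z1 + h) q ⊗ₖ (1 : Matrix (Fin N) (Fin N) ℂ)))
        * (h • Rsd N h z1 z2 q)
        * (((1 : Matrix (Fin N) (Fin N) ℂ) ⊗ₖ (gmat N (z2 + h) q)⁻¹)
          * ((gmat N z1 q)⁻¹ ⊗ₖ (1 : Matrix (Fin N) (Fin N) ℂ))) := by
      intro h
      simp only [Evtx, Matrix.mul_smul, Matrix.smul_mul, Matrix.mul_assoc]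
    -- gauge tendstos
    have hg1 : Filter.Tendsto (fun h : ℂ => gmat N (z1 + h) q) (nhds 0) (nhds (gmat N z1 q)) := by
      have : ContinuousAt (fun h : ℂ => gmat N (z1 + h) q) 0 :=
        (continuous_gmat q).continuousAt.comp (continuousAt_const.add continuousAt_id)
      simpa using this.tendsto
    have T1 : Filter.Tendsto (fun h : ℂ =>
        ((1 : Matrix (Fin N) (Fin N) ℂ) ⊗ₖ gmat N z2 q)
          * (gmat N (z1 + h) q ⊗ₖ (1 : Matrix (Fin N) (Fin N) ℂ))) l
        (nhds (((1 : Matrix (Fin N) (Fin N) ℂ) ⊗ₖ gmat N z2 q)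
          * (gmat N z1 q ⊗ₖ (1 : Matrix (Fin N) (Fin N) ℂ)))) := by
      refine (Filter.Tendsto.mul tendsto_const_nhds ?_).mono_left nhdsWithin_le_nhds
      exact ((continuous_kron_left (1 : Matrix (Fin N) (Fin N) ℂ)).tendsto _).comp hg1
    have TR : Filter.Tendsto (fun h : ℂ => h • Rsd N h z1 z2 q) l
        (nhds ((1 : Matrix (Fin N) (Fin N) ℂ) ⊗ₖ (1 : Matrix (Fin N) (Fin N) ℂ))) :=
      (part1_Rsd z1 z2 q hz1).mono_left
        (nhdsWithin_mono _ (fun h hh => hh.2.1))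
    have hg2inv : Filter.Tendsto (fun h : ℂ => (gmat N (z2 + h) q)⁻¹) (nhds 0)
        (nhds ((gmat N z2 q)⁻¹)) := by
      have hc : Filter.Tendsto (fun h : ℂ => z2 + h) (nhds 0) (nhds z2) := by
        have : ContinuousAt (fun h : ℂ => z2 + h) 0 := continuousAt_const.add continuousAt_id
        simpa using this.tendsto
      exact (tendsto_gmat_inv hN1 hz2 hq).comp hc
    have T2 : Filter.Tendsto (fun h : ℂ =>
        ((1 : Matrix (Fin N) (Fin N) ℂ) ⊗ₖ (gmat N (z2 + h) q)⁻¹)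
          * ((gmat N z1 q)⁻¹ ⊗ₖ (1 : Matrix (Fin N) (Fin N) ℂ))) l
        (nhds (((1 : Matrix (Fin N) (Fin N) ℂ) ⊗ₖ (gmat N z2 q)⁻¹)
          * ((gmat N z1 q)⁻¹ ⊗ₖ (1 : Matrix (Fin N) (Fin N) ℂ)))) := by
      refine (Filter.Tendsto.mul ?_ tendsto_const_nhds).mono_left nhdsWithin_le_nhds
      exact ((continuous_kron_right (1 : Matrix (Fin N) (Fin N) ℂ)).tendsto _).comp hg2inv
    have total := (T1.mul TR).mul T2
    have efin : (((1 : Matrix (Fin N) (Fin N) ℂ) ⊗ₖ gmat N z2 q)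
          * (gmat N z1 q ⊗ₖ (1 : Matrix (Fin N) (Fin N) ℂ)))
        * ((1 : Matrix (Fin N) (Fin N) ℂ) ⊗ₖ (1 : Matrix (Fin N) (Fin N) ℂ))
        * (((1 : Matrix (Fin N) (Fin N) ℂ) ⊗ₖ (gmat N z2 q)⁻¹)
          * ((gmat N z1 q)⁻¹ ⊗ₖ (1 : Matrix (Fin N) (Fin N) ℂ)))
        = ((1 : Matrix (Fin N) (Fin N) ℂ) ⊗ₖ (1 : Matrix (Fin N) (Fin N) ℂ)) := by
      rw [← Matrix.mul_kronecker_mul, ← Matrix.mul_kronecker_mul, ← Matrix.mul_kronecker_mul,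
        ← Matrix.mul_kronecker_mul]
      simp only [one_mul, mul_one]
      rw [gmat_mul_inv hN1 hz1 hq, gmat_mul_inv hN1 hz2 hq]
    rw [efin] at total
    exact Filter.Tendsto.congr (fun h => (key h).symm) total
  · intro hb z2 hbne hz2 hz2hb
    set l := nhdsWithin z2 {z1 : ℂ | Admissible N hb z1 z2 q} with hl
    have key : ∀ z1 : ℂ, (z1 - z2) • Evtx N hb z1 z2 q =
        (((1 : Matrix (Fin N) (Fin N) ℂ) ⊗ₖ gmat N z2 q)
          * (gmat N (z1 + hb) q ⊗ₖ (1 : Matrix (Fin N) (Fin N) ℂ)))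
        * ((z1 - z2) • Rsd N hb z1 z2 q)
        * (((1 : Matrix (Fin N) (Fin N) ℂ) ⊗ₖ (gmat N (z2 + hb) q)⁻¹)
          * ((gmat N z1 q)⁻¹ ⊗ₖ (1 : Matrix (Fin N) (Fin N) ℂ))) := by
      intro z1
      simp only [Evtx, Matrix.mul_smul, Matrix.smul_mul, Matrix.mul_assoc]
    have hg1 : Filter.Tendsto (fun z1 : ℂ => gmat N (z1 + hb) q) (nhds z2)
        (nhds (gmat N (z2 + hb) q)) := by
      have : ContinuousAt (fun z1 : ℂ => gmat N (z1 + hb) q) z2 :=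
        (continuous_gmat q).continuousAt.comp (continuousAt_id.add continuousAt_const)
      simpa using this.tendsto
    have T1 : Filter.Tendsto (fun z1 : ℂ =>
        ((1 : Matrix (Fin N) (Fin N) ℂ) ⊗ₖ gmat N z2 q)
          * (gmat N (z1 + hb) q ⊗ₖ (1 : Matrix (Fin N) (Fin N) ℂ))) l
        (nhds (((1 : Matrix (Fin N) (Fin N) ℂ) ⊗ₖ gmat N z2 q)
          * (gmat N (z2 + hb) q ⊗ₖ (1 : Matrix (Fin N) (Fin N) ℂ)))) := by
      refine (Filter.Tendsto.mul tendsto_const_nhds ?_).mono_left nhdsWithin_le_nhds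
      exact ((continuous_kron_left (1 : Matrix (Fin N) (Fin N) ℂ)).tendsto _).comp hg1
    have TR : Filter.Tendsto (fun z1 : ℂ => (z1 - z2) • Rsd N hb z1 z2 q) l
        (nhds (Pmat N)) :=
      (part2_Rsd hb z2 q hbne hz2hb).mono_left
        (nhdsWithin_mono _ (fun z1 hz => hz.2.2.2.2.1))
    have T2 : Filter.Tendsto (fun z1 : ℂ =>
        ((1 : Matrix (Fin N) (Fin N) ℂ) ⊗ₖ (gmat N (z2 + hb) q)⁻¹)
          * ((gmat N z1 q)⁻¹ ⊗ₖ (1 : Matrix (Fin N) (Fin N) ℂ))) l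
        (nhds (((1 : Matrix (Fin N) (Fin N) ℂ) ⊗ₖ (gmat N (z2 + hb) q)⁻¹)
          * ((gmat N z2 q)⁻¹ ⊗ₖ (1 : Matrix (Fin N) (Fin N) ℂ)))) := by
      refine (Filter.Tendsto.mul tendsto_const_nhds ?_).mono_left nhdsWithin_le_nhds
      exact ((continuous_kron_left (1 : Matrix (Fin N) (Fin N) ℂ)).tendsto _).comp
        (tendsto_gmat_inv hN1 hz2 hq)
    have total := (T1.mul TR).mul T2
    have efin : (((1 : Matrix (Fin N) (Fin N) ℂ) ⊗ₖ gmat N z2 q)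
          * (gmat N (z2 + hb) q ⊗ₖ (1 : Matrix (Fin N) (Fin N) ℂ)))
        * Pmat N
        * (((1 : Matrix (Fin N) (Fin N) ℂ) ⊗ₖ (gmat N (z2 + hb) q)⁻¹)
          * ((gmat N z2 q)⁻¹ ⊗ₖ (1 : Matrix (Fin N) (Fin N) ℂ)))
        = Pmat N := by
      rw [← Matrix.mul_kronecker_mul, ← Matrix.mul_kronecker_mul]
      simp only [one_mul, mul_one]
      rw [Matrix.mul_assoc, Pmat_mul_kron, ← Matrix.mul_assoc, ← Matrix.mul_kronecker_mul,
        gmat_mul_inv hN1 hz2hb hq, gmat_mul_inv hN1 hz2 hq, Matrix.one_kronecker_one, one_mul]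
    rw [efin] at total
    exact Filter.Tendsto.congr (fun z1 => (key z1).symm) total
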